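/- Let w be a group-word and G a group such that the set G_w of w-values is finite with |G_w| = m. Then the centralizer C = C_G(G_w) of all w-values has index at most m! in G, and C ∩ w(G) is an abelian subgroup of index at most m! in w(G); in particular, w(G) contains an abelian subgroup of finite index. -/

import Mathlib

open scoped commutatorElement

/-- The set of `w`-values in `G`: all images of the word `w` under
evaluations of the variables in `G`. -/
def wValues (w : FreeGroup ℕ) (G : Type*) [Group G] : Set G :=
  {g | ∃ f : ℕ → G, FreeGroup.lift f w = g}

/-- The verbal subgroup of `G` determined by the word `w`: the subgroup
generated by the set of `w`-values. -/
def verbalSubgroup (w : FreeGroup ℕ) (G : Type*) [Group G] : Subgroup G :=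
  Subgroup.closure (wValues w G)

/-- `IsMCWOn w S` : `w` is a multilinear (outer) commutator word whose set of
variables is exactly `S`.  Every variable is such a word, and the commutator of
two multilinear commutator words in disjoint sets of variables is again one. -/
inductive IsMCWOn : FreeGroup ℕ → Set ℕ → Prop
  | var (i : ℕ) : IsMCWOn (FreeGroup.of i) {i}
  | comm {w₁ w₂ : FreeGroup ℕ} {S₁ S₂ : Set ℕ} :
      IsMCWOn w₁ S₁ → IsMCWOn w₂ S₂ → Disjoint S₁ S₂ → IsMCWOn ⁅w₁, w₂⁆ (S₁ ∪ S₂)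

/-- A multilinear commutator word (outer commutator word). -/
def IsMultilinearCommutatorWord (w : FreeGroup ℕ) : Prop := ∃ S, IsMCWOn w S

/-- `N` is a `w`-subgroup of `G`: `N` is generated by cyclic subgroups `⟨x⟩`
contained in the set of `w`-values of `G`. -/
def IsWSubgroup (w : FreeGroup ℕ) {G : Type*} [Group G] (N : Subgroup G) : Prop :=
  ∃ X : Set G, (∀ x ∈ X, ∀ i : ℤ, x ^ i ∈ wValues w G) ∧ Subgroup.closure X = N

/-- A group is residually finite if every nontrivial element lies outside some
normal subgroup of finite index. -/
def ResiduallyFinite (G : Type*) [Group G] : Prop :=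
  ∀ g : G, g ≠ 1 → ∃ N : Subgroup G, N.Normal ∧ N.FiniteIndex ∧ g ∉ N

/-- The lower central word `γ_k`: `γ_1 = x_1` and `γ_k = [γ_{k-1}, x_k]`. -/
def gammaWord : ℕ → FreeGroup ℕ
  | 0 => 1
  | 1 => FreeGroup.of 0
  | (k + 2) => ⁅gammaWord (k + 1), FreeGroup.of (k + 1)⁆

/-- The image of `M` in `G ⧸ N` is an abelian `w`-subgroup of `G ⧸ N`. -/
def IsAbelianWSubgroupInQuotient (w : FreeGroup ℕ) {G : Type*} [Group G] (N M : Subgroup G)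
    (hN : N.Normal) : Prop :=
  haveI := hN
  IsMulCommutative ↥(M.map (QuotientGroup.mk' N)) ∧ IsWSubgroup w (M.map (QuotientGroup.mk' N))

/-- The image of `M` in `G ⧸ N` is abelian and is a `w`-subgroup of `G ⧸ N` for
every multilinear commutator word `w`. -/
def IsAbelianWSubgroupInQuotientForAllWords {G : Type*} [Group G] (N M : Subgroup G)
    (hN : N.Normal) : Prop :=
  haveI := hN
  IsMulCommutative ↥(M.map (QuotientGroup.mk' N)) ∧
    ∀ w : FreeGroup ℕ, IsMultilinearCommutatorWord w →
      IsWSubgroup w (M.map (QuotientGroup.mk' N))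

/-- If `G` has exactly `m` `w`-values, then the centralizer
`C = C_G(G_w)` has index at most `m!` in `G`, and `C ⊓ w(G)` is an abelian subgroup
of index at most `m!` in `w(G)`; in particular `w(G)` contains an abelian subgroup
of finite index. -/
theorem centralizer_of_word_values
    (w : FreeGroup ℕ) (G : Type*) [Group G] (m : ℕ)
    (hfin : (wValues w G).Finite) (hm : (wValues w G).ncard = m) :
    (Subgroup.centralizer (wValues w G)).index ≤ m.factorial ∧
    IsMulCommutative ↥(Subgroup.centralizer (wValues w G) ⊓ verbalSubgroup w G) ∧
    (Subgroup.centralizer (wValues w G) ⊓ verbalSubgroup w G).relIndex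
        (verbalSubgroup w G) ≤ m.factorial ∧
    ∃ H : Subgroup G, H ≤ verbalSubgroup w G ∧ IsMulCommutative ↥H ∧
      H.relIndex (verbalSubgroup w G) ≠ 0 := by
  
  classical
  set S := wValues w G with hS
  -- conjugation preserves the set of w-values
  have hconj : ∀ (g x : G), x ∈ S → g * x * g⁻¹ ∈ S := by
    rintro g x ⟨f, rfl⟩
    refine ⟨fun i => g * f i * g⁻¹, ?_⟩
    have h1 : (((MulAut.conj g) : G ≃* G).toMonoidHom.comp (FreeGroup.lift f))
        = FreeGroup.lift (fun i => g * f i * g⁻¹) := by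
      ext i
      simp [MulAut.conj]
    have := congrArg (fun φ : FreeGroup ℕ →* G => φ w) h1
    simpa [MulAut.conj] using this.symm
  haveI : Fintype S := hfin.fintype
  -- the conjugation permutation representation on S
  let π : G →* Equiv.Perm S :=
  { toFun := fun g =>
      { toFun := fun x => ⟨g * x * g⁻¹, hconj g x x.2⟩
        invFun := fun x => ⟨g⁻¹ * x * g, by simpa using hconj g⁻¹ x x.2⟩
        left_inv := fun x => by ext; simp [mul_assoc]
        right_inv := fun x => by ext; simp [mul_assoc] }
    map_one' := by ext x; simp
    map_mul' := fun a b => by ext x; simp [mul_assoc] }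
  have hker : π.ker = Subgroup.centralizer S := by
    ext g
    simp only [MonoidHom.mem_ker, Subgroup.mem_centralizer_iff]
    constructor
    · intro h x hx
      have := congrArg Subtype.val (congrFun (congrArg (fun e : Equiv.Perm S => e.toFun) h) ⟨x, hx⟩)
      change g * x * g⁻¹ = x at this
      have hx' : g * x * g⁻¹ = x := this
      calc x * g = (g * x * g⁻¹) * g := by rw [hx']
        _ = g * x := by group
    · intro h
      ext x
      have := h x x.2
      show g * (x : G) * g⁻¹ = x
      rw [← this]; group
  have hcard : Nat.card S = m := by
    rw [Nat.card_coe_set_eq, hm]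
  haveI : Finite (Equiv.Perm S) := inferInstance
  have hindex : (Subgroup.centralizer S).index ≤ m.factorial := by
    rw [← hker, Subgroup.index_ker]
    calc Nat.card π.range ≤ Nat.card (Equiv.Perm S) :=
          Nat.card_le_card_of_injective _ Subtype.val_injective
      _ = (Nat.card S).factorial := by
          simp [Nat.card_eq_fintype_card, Fintype.card_perm]
      _ = m.factorial := by rw [hcard]
  have hindex_ne : (Subgroup.centralizer S).index ≠ 0 := by
    rw [← hker, Subgroup.index_ker]
    exact Nat.card_ne_zero.mpr ⟨⟨1, 1, map_one π⟩, inferInstance⟩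
  -- centralizer is normal since S is conjugation-invariant
  haveI hnormal : (Subgroup.centralizer S).Normal := by
    constructor
    intro n hn g
    rw [Subgroup.mem_centralizer_iff] at hn ⊢
    intro x hx
    have hx' : g⁻¹ * x * g ∈ S := by simpa using hconj g⁻¹ x hx
    have := hn _ hx'
    have h2 : x * (g * n * g⁻¹) = g * ((g⁻¹ * x * g) * n) * g⁻¹ := by group
    rw [h2, this]; group
  -- commutativity of C ⊓ w(G)
  have hVle : ∀ a : G, a ∈ Subgroup.centralizer S →
      verbalSubgroup w G ≤ Subgroup.centralizer {a} := by
    intro a ha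
    refine Subgroup.closure_le _ |>.mpr ?_
    intro x hx
    rw [SetLike.mem_coe, Subgroup.mem_centralizer_iff]
    rintro h rfl
    exact (ha x hx).symm
  have hcomm : IsMulCommutative ↥(Subgroup.centralizer S ⊓ verbalSubgroup w G) := by
    constructor
    constructor
    rintro ⟨a, haC, haV⟩ ⟨b, hbC, hbV⟩
    ext
    show a * b = b * a
    have := hVle a haC hbV
    rw [Subgroup.mem_centralizer_iff] at this
    exact this a rfl
  have hrel : (Subgroup.centralizer S ⊓ verbalSubgroup w G).relIndex (verbalSubgroup w G)
      = (Subgroup.centralizer S).relIndex (verbalSubgroup w G) :=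
    Subgroup.inf_relIndex_right _ _
  have hdvd : (Subgroup.centralizer S).relIndex (verbalSubgroup w G)
      ∣ (Subgroup.centralizer S).index :=
    Subgroup.relIndex_dvd_index_of_normal _ _
  have hrelle : (Subgroup.centralizer S ⊓ verbalSubgroup w G).relIndex (verbalSubgroup w G)
      ≤ m.factorial := by
    rw [hrel]
    exact le_trans (Nat.le_of_dvd (Nat.pos_of_ne_zero hindex_ne) hdvd) hindex
  have hrelne : (Subgroup.centralizer S ⊓ verbalSubgroup w G).relIndex (verbalSubgroup w G)
      ≠ 0 := by
    rw [hrel]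
    intro h0
    rw [h0] at hdvd
    exact hindex_ne (Nat.eq_zero_of_zero_dvd hdvd)
  exact ⟨hindex, hcomm, hrelle,
    ⟨Subgroup.centralizer S ⊓ verbalSubgroup w G, inf_le_right, hcomm, hrelne⟩⟩
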